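/- For every R > 0, the double integral of log|z₁ − z₂| over the disc B(0,R) × B(0,R) equals π²R⁴(log R − 1/4), i.e. ∫_{B(0,R)} ∫_{B(0,R)} log|z₁ − z₂| dz₁ dz₂ = π² R⁴ (log R − 1/4), where B(0,R) ⊂ ℂ is the disc of radius R centered at 0 and the integrals are with respect to the Lebesgue (area) measure on ℂ ≅ ℝ². -/

import Mathlib

open Real MeasureTheory intervalIntegral Set Metric

noncomputable def Jc (c : ℂ) : ℝ :=
  ∫ θ in (0:ℝ)..(2*π), Real.log (‖1 - c * Complex.exp (θ * Complex.I)‖)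

lemma one_sub_ne (c : ℂ) (hc : ‖c‖ < 1) (θ : ℝ) :
    1 - c * Complex.exp (θ * Complex.I) ≠ 0 := by
  intro h
  have h1 : ‖c * Complex.exp (θ * Complex.I)‖ < 1 := by
    rw [norm_mul, Complex.norm_exp_ofReal_mul_I, mul_one]; exact hc
  rw [sub_eq_zero] at h
  rw [← h] at h1
  simp at h1

lemma cont_g (c : ℂ) (hc : ‖c‖ < 1) :
    Continuous (fun θ : ℝ => Real.log (‖1 - c * Complex.exp (θ * Complex.I)‖)) := by
  have h1 : Continuous (fun θ : ℝ => ‖1 - c * Complex.exp (θ * Complex.I)‖) := by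
    apply continuous_norm.comp
    continuity
  apply h1.log
  intro θ
  simp only [ne_eq, norm_eq_zero]
  exact one_sub_ne c hc θ

lemma per_g (c : ℂ) :
    Function.Periodic (fun θ : ℝ => Real.log (‖1 - c * Complex.exp (θ * Complex.I)‖))
      (2*π) := by
  intro θ
  have : ((θ + 2*π : ℝ) : ℂ) * Complex.I = θ * Complex.I + 2*π*Complex.I := by
    push_cast; ring
  simp only [this, Complex.exp_add, Complex.exp_two_pi_mul_I, mul_one]

lemma Jc_double (c : ℂ) (hc : ‖c‖ < 1) : Jc (c^2) = 2 * Jc c := by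
  have hc2 : ‖c^2‖ < 1 := by
    rw [norm_pow]
    exact pow_lt_one₀ (norm_nonneg c) hc (by norm_num)
  set g : ℝ → ℝ := fun θ => Real.log (‖1 - c * Complex.exp (θ * Complex.I)‖) with hg
  set h : ℝ → ℝ := fun θ => Real.log (‖1 - c^2 * Complex.exp (θ * Complex.I)‖) with hh
  -- ∫_0^{2π} h(2θ) dθ = Jc (c^2)
  have key1 : ∫ θ in (0:ℝ)..(2*π), h (2*θ) = Jc (c^2) := by
    rw [intervalIntegral.integral_comp_mul_left h (by norm_num : (2:ℝ) ≠ 0)]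
    have h40 : ∫ θ in (0:ℝ)..(2*(2*π)), h θ
        = (∫ θ in (0:ℝ)..(2*π), h θ) + ∫ θ in (2*π)..(2*(2*π)), h θ := by
      rw [intervalIntegral.integral_add_adjacent_intervals]
      · exact (cont_g _ hc2).intervalIntegrable _ _
      · exact (cont_g _ hc2).intervalIntegrable _ _
    have h24 : ∫ θ in (2*π)..(2*(2*π)), h θ = ∫ θ in (0:ℝ)..(2*π), h θ := by
      have := (per_g (c^2)).intervalIntegral_add_eq (2*π) 0
      simpa [two_mul, add_assoc] using this
    rw [mul_zero, h40, h24, smul_eq_mul, Jc]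
    ring_nf
    rfl
  -- h(2θ) = g θ + g (θ + π)
  have key2 : ∀ θ : ℝ, h (2*θ) = g θ + g (θ + π) := by
    intro θ
    have e1 : ((2*θ : ℝ) : ℂ) * Complex.I = (θ : ℂ) * Complex.I + (θ : ℂ) * Complex.I := by
      push_cast; ring
    have e2 : ((θ + π : ℝ) : ℂ) * Complex.I = (θ:ℂ) * Complex.I + π * Complex.I := by
      push_cast; ring
    have factor : 1 - c^2 * Complex.exp ((2*θ : ℝ) * Complex.I)
        = (1 - c * Complex.exp ((θ:ℝ) * Complex.I))
          * (1 - c * Complex.exp ((θ + π : ℝ) * Complex.I)) := by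
      rw [e1, e2, Complex.exp_add, Complex.exp_add, Complex.exp_pi_mul_I]
      ring
    rw [hh]
    simp only [factor, norm_mul]
    rw [Real.log_mul (norm_ne_zero_iff.mpr (one_sub_ne c hc θ))
      (by have := norm_ne_zero_iff.mpr (one_sub_ne c hc (θ+π)); push_cast at this ⊢; exact this)]
  have key3 : ∫ θ in (0:ℝ)..(2*π), h (2*θ)
      = (∫ θ in (0:ℝ)..(2*π), g θ) + ∫ θ in (0:ℝ)..(2*π), g (θ + π) := by
    have h2 : IntervalIntegrable (fun θ : ℝ => g (θ + π)) volume 0 (2*π) :=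
      ((cont_g c hc).comp (continuous_add_right π)).intervalIntegrable _ _
    calc ∫ θ in (0:ℝ)..(2*π), h (2*θ) = ∫ θ in (0:ℝ)..(2*π), (g θ + g (θ + π)) := by
          simp only [key2]
      _ = _ := intervalIntegral.integral_add ((cont_g c hc).intervalIntegrable _ _) h2
  have key4 : ∫ θ in (0:ℝ)..(2*π), g (θ + π) = Jc c := by
    rw [intervalIntegral.integral_comp_add_right g π,
      show ((0:ℝ)+π) = π by ring, show ((2*π+π):ℝ) = π + 2*π by ring]
    have := (per_g c).intervalIntegral_add_eq π 0
    rw [zero_add] at this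
    rw [Jc, ← hg, ← this]
  rw [← key1, key3, key4, Jc, ← hg]
  ring

lemma Jc_bound (c : ℂ) (hc : ‖c‖ < 1) :
    |Jc c| ≤ (-Real.log (1 - ‖c‖)) * (2*π) := by
  have h0 : (0:ℝ) < 1 - ‖c‖ := by linarith
  have key : ∀ θ : ℝ, |Real.log (‖1 - c * Complex.exp (θ * Complex.I)‖)|
      ≤ -Real.log (1 - ‖c‖) := by
    intro θ
    set x := ‖1 - c * Complex.exp (θ * Complex.I)‖ with hx
    have hxpos : 0 < x := norm_pos_iff.mpr (one_sub_ne c hc θ)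
    have habs : ‖c * Complex.exp (θ * Complex.I)‖ = ‖c‖ := by
      rw [norm_mul, Complex.norm_exp_ofReal_mul_I, mul_one]
    have hlo : 1 - ‖c‖ ≤ x := by
      have := norm_sub_norm_le (1:ℂ) (c * Complex.exp (θ * Complex.I))
      simpa [habs] using this
    have hhi : x ≤ 1 + ‖c‖ := by
      have := norm_add_le (1:ℂ) (-(c * Complex.exp (θ * Complex.I)))
      simpa [habs, sub_eq_add_neg, hx] using this
    have hhi2 : x ≤ (1 - ‖c‖)⁻¹ := by
      apply hhi.trans
      rw [inv_eq_one_div, le_div_iff₀ h0]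
      nlinarith [norm_nonneg c, sq_nonneg (‖c‖)]
    rw [abs_le]
    constructor
    · have := Real.log_le_log h0 hlo
      linarith
    · have := Real.log_le_log hxpos hhi2
      rwa [Real.log_inv] at this
  have := intervalIntegral.norm_integral_le_of_norm_le_const
    (f := fun θ : ℝ => Real.log (‖1 - c * Complex.exp (θ * Complex.I)‖))
    (a := 0) (b := 2*π) (C := -Real.log (1 - ‖c‖)) (fun θ _ => key θ)
  rw [Jc]
  calc |∫ θ in (0:ℝ)..(2*π), Real.log (‖1 - c * Complex.exp (θ * Complex.I)‖)|
      ≤ (-Real.log (1 - ‖c‖)) * |2*π - 0| := this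
    _ = (-Real.log (1 - ‖c‖)) * (2*π) := by
        rw [sub_zero, abs_of_pos (by positivity)]

lemma Jc_zero (c : ℂ) (hc : ‖c‖ < 1) : Jc c = 0 := by
  set C := -Real.log (1 - ‖c‖) with hC
  have hiter : ∀ n : ℕ, Jc c = Jc (c ^ (2^n)) / 2^n := by
    intro n
    induction n with
    | zero => simp
    | succ n ih =>
      have hcn : ‖c ^ (2^n)‖ < 1 := by
        rw [norm_pow]
        exact pow_lt_one₀ (norm_nonneg c) hc (pow_pos two_pos n).ne'
      have h2 : Jc (c ^ 2^(n+1)) = 2 * Jc (c ^ 2^n) := by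
        rw [pow_succ, pow_mul]; exact Jc_double _ hcn
      rw [ih, h2, pow_succ]
      field_simp
  have hbound : ∀ n : ℕ, |Jc c| ≤ (C * (2*π)) / 2^n := by
    intro n
    have hcn : ‖c ^ (2^n)‖ < 1 := by
      rw [norm_pow]
      calc ‖c‖ ^ 2^n ≤ ‖c‖ ^ 1 :=
            pow_le_pow_of_le_one (norm_nonneg c) hc.le (Nat.one_le_two_pow)
        _ < 1 := by simpa using hc
    have hle : ‖c ^ (2^n)‖ ≤ ‖c‖ := by
      rw [norm_pow]
      calc ‖c‖ ^ 2^n ≤ ‖c‖ ^ 1 :=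
            pow_le_pow_of_le_one (norm_nonneg c) hc.le (Nat.one_le_two_pow)
        _ = ‖c‖ := pow_one _
    have hClog : -Real.log (1 - ‖c ^ (2^n)‖) ≤ C := by
      rw [hC, neg_le_neg_iff]
      apply Real.log_le_log (by linarith)
      linarith
    have := Jc_bound (c ^ (2^n)) hcn
    rw [hiter n, abs_div, abs_of_pos (by positivity : (0:ℝ) < (2:ℝ)^n)]
    gcongr
    calc |Jc (c ^ 2^n)| ≤ (-Real.log (1 - ‖c ^ (2^n)‖)) * (2*π) := this
      _ ≤ C * (2*π) := mul_le_mul_of_nonneg_right hClog (by positivity)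
  have hlim : Filter.Tendsto (fun n : ℕ => (C * (2*π)) / 2^n) Filter.atTop (nhds 0) :=
    tendsto_const_nhds.div_atTop (tendsto_pow_atTop_atTop_of_one_lt one_lt_two)
  have h0' : |Jc c| ≤ 0 := ge_of_tendsto' hlim hbound
  exact abs_eq_zero.1 (le_antisymm h0' (abs_nonneg _))

lemma circle_log (a : ℂ) (r : ℝ) (hr : 0 < r) (hne : ‖a‖ ≠ r) :
    ∫ θ in (0:ℝ)..(2*π), Real.log (‖a - r * Complex.exp (θ * Complex.I)‖)
      = 2*π * Real.log (max (‖a‖) r) := by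
  rcases lt_or_gt_of_ne hne with h | h
  · -- abs a < r
    set c : ℂ := a / r with hc
    have hcabs : ‖c‖ < 1 := by
      rw [hc, norm_div, Complex.norm_real, Real.norm_eq_abs, abs_of_pos hr, div_lt_one hr]
      exact h
    have hpt : ∀ θ : ℝ, Real.log (‖a - r * Complex.exp (θ * Complex.I)‖)
        = Real.log r + Real.log (‖1 - c * Complex.exp ((-θ : ℝ) * Complex.I)‖) := by
      intro θ
      have hr0 : (r : ℂ) ≠ 0 := by exact_mod_cast hr.ne'
      have hfac : a - r * Complex.exp (θ * Complex.I)
          = (-(r : ℂ) * Complex.exp (θ * Complex.I))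
            * (1 - c * Complex.exp ((-θ : ℝ) * Complex.I)) := by
        have hexp : Complex.exp ((θ:ℝ) * Complex.I) * Complex.exp ((-θ:ℝ) * Complex.I) = 1 := by
          rw [← Complex.exp_add,
            show ((θ:ℝ):ℂ) * Complex.I + ((-θ:ℝ):ℂ) * Complex.I = 0 by push_cast; ring,
            Complex.exp_zero]
        have h2 : ((r:ℂ)) * c = a := by rw [hc]; field_simp
        calc a - r * Complex.exp (θ * Complex.I)
            = ((r:ℂ) * c) - r * Complex.exp (θ * Complex.I) := by rw [h2]
          _ = ((r:ℂ) * c) * (Complex.exp ((θ:ℝ) * Complex.I) * Complex.exp ((-θ:ℝ) * Complex.I))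
              - r * Complex.exp (θ * Complex.I) := by rw [hexp, mul_one]
          _ = _ := by ring
      rw [hfac, norm_mul, Real.log_mul, norm_mul]
      · congr 1
        rw [norm_neg, Complex.norm_real, Real.norm_eq_abs, Complex.norm_exp_ofReal_mul_I,
          abs_of_pos hr, mul_one]
      · simp only [ne_eq, norm_eq_zero, mul_eq_zero, neg_eq_zero, Complex.ofReal_eq_zero, not_or]
        exact ⟨by exact_mod_cast hr.ne', Complex.exp_ne_zero _⟩
      · simp only [ne_eq, norm_eq_zero]
        intro h0
        have : ‖c * Complex.exp ((-θ:ℝ) * Complex.I)‖ = ‖c‖ := by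
          rw [norm_mul, Complex.norm_exp_ofReal_mul_I, mul_one]
        rw [sub_eq_zero] at h0
        rw [← h0] at this
        simp at this
        rw [this] at hcabs
        simp at hcabs
    calc ∫ θ in (0:ℝ)..(2*π), Real.log (‖a - r * Complex.exp (θ * Complex.I)‖)
        = ∫ θ in (0:ℝ)..(2*π), (Real.log r
            + Real.log (‖1 - c * Complex.exp ((-θ:ℝ) * Complex.I)‖)) := by
          apply intervalIntegral.integral_congr
          intro θ _
          exact hpt θ
      _ = 2*π * Real.log r + Jc c := by
          have hcont : Continuous (fun θ : ℝ =>
              Real.log (‖1 - c * Complex.exp ((-θ : ℝ) * Complex.I)‖)) :=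
            (cont_g c hcabs).comp continuous_neg
          rw [intervalIntegral.integral_add (intervalIntegrable_const)
            (hcont.intervalIntegrable _ _)]
          congr 1
          · simp [mul_comm]
          · have := intervalIntegral.integral_comp_neg
              (fun θ : ℝ => Real.log (‖1 - c * Complex.exp ((θ:ℝ) * Complex.I)‖))
              (a := 0) (b := 2*π)
            push_cast at this ⊢
            rw [this, neg_zero]
            have hper := (per_g c).intervalIntegral_add_eq (-(2*π)) 0
            rw [show (-(2*π) + 2*π : ℝ) = 0 by ring, zero_add] at hper
            rw [hper, Jc]
      _ = 2*π * Real.log (max (‖a‖) r) := by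
          rw [Jc_zero c hcabs, max_eq_right h.le, add_zero]
  · -- r < abs a
    have ha0 : a ≠ 0 := by
      intro h0; rw [h0] at h; simp at h; linarith
    set c : ℂ := (r : ℂ) / a with hc
    have hcabs : ‖c‖ < 1 := by
      rw [hc, norm_div, Complex.norm_real, Real.norm_eq_abs, abs_of_pos hr, div_lt_one (by
        have := norm_pos_iff.mpr ha0; linarith)]
      exact h
    have hpt : ∀ θ : ℝ, Real.log (‖a - r * Complex.exp (θ * Complex.I)‖)
        = Real.log (‖a‖)
          + Real.log (‖1 - c * Complex.exp ((θ : ℝ) * Complex.I)‖) := by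
      intro θ
      have hfac : a - r * Complex.exp (θ * Complex.I)
          = a * (1 - c * Complex.exp ((θ:ℝ) * Complex.I)) := by
        rw [hc]; field_simp
      rw [hfac, norm_mul, Real.log_mul]
      · simp only [ne_eq, norm_eq_zero]; exact ha0
      · simp only [ne_eq, norm_eq_zero]
        intro h0
        have : ‖c * Complex.exp ((θ:ℝ) * Complex.I)‖ = ‖c‖ := by
          rw [norm_mul, Complex.norm_exp_ofReal_mul_I, mul_one]
        rw [sub_eq_zero] at h0
        rw [← h0] at this
        simp at this
        rw [this] at hcabs
        simp at hcabs
    calc ∫ θ in (0:ℝ)..(2*π), Real.log (‖a - r * Complex.exp (θ * Complex.I)‖)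
        = ∫ θ in (0:ℝ)..(2*π), (Real.log (‖a‖)
            + Real.log (‖1 - c * Complex.exp ((θ:ℝ) * Complex.I)‖)) := by
          apply intervalIntegral.integral_congr
          intro θ _
          exact hpt θ
      _ = 2*π * Real.log (‖a‖) + Jc c := by
          rw [intervalIntegral.integral_add (intervalIntegrable_const)
            ((cont_g c hcabs).intervalIntegrable _ _)]
          congr 1
          simp [mul_comm]
      _ = 2*π * Real.log (max (‖a‖) r) := by
          rw [Jc_zero c hcabs, max_eq_left h.le, add_zero]

lemma logint : ∀ a b : ℝ, IntervalIntegrable Real.log volume a b := by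
  have key : ∀ b : ℝ, 0 ≤ b → IntervalIntegrable Real.log volume 0 b := by
    intro b hb
    have hg : IntervalIntegrable (fun x : ℝ => b + 2 * x ^ (-(1/2) : ℝ)) volume 0 b :=
      intervalIntegrable_const.add ((intervalIntegrable_rpow' (by norm_num)).const_mul 2)
    apply hg.mono_fun
    · exact Real.measurable_log.aestronglyMeasurable
    · rw [Filter.EventuallyLE, ae_restrict_iff' measurableSet_uIoc]
      apply Filter.Eventually.of_forall
      intro x hx
      rw [Set.uIoc_of_le hb] at hx
      obtain ⟨hx0, hxb⟩ := hx
      have hrpow : (0:ℝ) < x ^ (-(1/2) : ℝ) := Real.rpow_pos_of_pos hx0 _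
      have hRHS : b + 2 * x ^ (-(1/2) : ℝ) = |b + 2 * x ^ (-(1/2) : ℝ)| := by
        rw [abs_of_pos (by positivity)]
      simp only [Real.norm_eq_abs]
      rw [← hRHS]
      rcases le_or_gt 1 x with h1 | h1
      · rw [abs_of_nonneg (Real.log_nonneg h1)]
        calc Real.log x ≤ x - 1 := Real.log_le_sub_one_of_pos hx0
          _ ≤ b := by linarith
          _ ≤ b + 2 * x ^ (-(1/2) : ℝ) := by linarith
      · rw [abs_of_nonpos (Real.log_nonpos hx0.le h1.le)]
        have hsq : (0:ℝ) < Real.sqrt x := Real.sqrt_pos.2 hx0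
        have h2 : Real.log ((Real.sqrt x)⁻¹) ≤ (Real.sqrt x)⁻¹ - 1 :=
          Real.log_le_sub_one_of_pos (by positivity)
        rw [Real.log_inv, Real.log_sqrt hx0.le] at h2
        have h3 : (Real.sqrt x)⁻¹ = x ^ (-(1/2) : ℝ) := by
          rw [Real.sqrt_eq_rpow, ← Real.rpow_neg hx0.le]
        rw [h3] at h2
        nlinarith
  intro a b
  have key2 : ∀ x : ℝ, IntervalIntegrable Real.log volume 0 x := by
    intro x
    rcases le_or_gt 0 x with hx | hx
    · exact key x hx
    · have h4 : IntervalIntegrable (fun y : ℝ => Real.log (-y)) volume (-0) (-x) := by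
        have he : (fun y : ℝ => Real.log (-y)) = Real.log :=
          funext fun y => Real.log_neg_eq_log y
        rw [he, neg_zero]
        exact key (-x) (by linarith)
      exact (IntervalIntegrable.iff_comp_neg (by simp)).mpr h4
  exact (key2 a).symm.trans (key2 b)

lemma polar_ball (R : ℝ) (hR : 0 < R) (f : ℂ → ℝ)
    (hf : IntegrableOn (fun p : ℝ × ℝ => p.1 * f (p.1 * Complex.exp (p.2 * Complex.I)))
      (Ioo 0 R ×ˢ Ioo (-π) π) (volume.prod volume)) :
    ∫ z in ball (0:ℂ) R, f z
      = ∫ r in Ioo (0:ℝ) R, ∫ θ in Ioo (-π) π, r * f (r * Complex.exp (θ * Complex.I)) := by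
  have hsymm : ∀ p : ℝ × ℝ, (Complex.polarCoord.symm p : ℂ)
      = (p.1 : ℂ) * Complex.exp (p.2 * Complex.I) := by
    intro p
    rw [Complex.polarCoord_symm_apply, Complex.exp_mul_I]
    push_cast
    ring
  have hcont : Continuous (fun p : ℝ × ℝ => (Complex.polarCoord.symm p : ℂ)) := by
    have : (fun p : ℝ × ℝ => (Complex.polarCoord.symm p : ℂ))
        = fun p : ℝ × ℝ => (p.1 : ℂ) * Complex.exp (p.2 * Complex.I) := funext hsymm
    rw [this]
    continuity
  have hpre : MeasurableSet ((fun p : ℝ × ℝ => (Complex.polarCoord.symm p : ℂ)) ⁻¹' ball 0 R) :=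
    (isOpen_ball.preimage hcont).measurableSet
  have step1 : ∫ z in ball (0:ℂ) R, f z = ∫ z, (ball (0:ℂ) R).indicator f z :=
    (MeasureTheory.integral_indicator measurableSet_ball).symm
  rw [step1, ← Complex.integral_comp_polarCoord_symm ((ball (0:ℂ) R).indicator f)]
  have step2 : ∀ p : ℝ × ℝ,
      p.1 • (ball (0:ℂ) R).indicator f (Complex.polarCoord.symm p)
      = ((fun p : ℝ × ℝ => (Complex.polarCoord.symm p : ℂ)) ⁻¹' ball 0 R).indicator
          (fun p : ℝ × ℝ => p.1 * f ((p.1 : ℂ) * Complex.exp (p.2 * Complex.I))) p := by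
    intro p
    classical
    rw [Set.indicator_apply, Set.indicator_apply]
    simp only [Set.mem_preimage]
    split_ifs with h
    · rw [smul_eq_mul, hsymm p]
    · rw [smul_eq_mul, mul_zero]
  rw [show (fun p : ℝ × ℝ => p.1 • (ball (0:ℂ) R).indicator f (Complex.polarCoord.symm p))
      = fun p : ℝ × ℝ => ((fun p : ℝ × ℝ => (Complex.polarCoord.symm p : ℂ)) ⁻¹' ball 0 R).indicator
          (fun p : ℝ × ℝ => p.1 * f ((p.1 : ℂ) * Complex.exp (p.2 * Complex.I))) p
      from funext step2]
  rw [setIntegral_indicator hpre]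
  have hset : polarCoord.target ∩
      ((fun p : ℝ × ℝ => (Complex.polarCoord.symm p : ℂ)) ⁻¹' ball 0 R)
      = Ioo (0:ℝ) R ×ˢ Ioo (-π) π := by
    ext ⟨r, θ⟩
    simp only [polarCoord_target, Set.mem_inter_iff, Set.mem_prod, Set.mem_Ioi, Set.mem_Ioo,
      Set.mem_preimage, mem_ball, dist_zero_right, Complex.norm_polarCoord_symm]
    constructor
    · rintro ⟨⟨hr, hθ⟩, hb⟩
      rw [abs_of_pos hr] at hb
      exact ⟨⟨hr, hb⟩, hθ⟩
    · rintro ⟨⟨hr, hb⟩, hθ⟩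
      refine ⟨⟨hr, hθ⟩, ?_⟩
      rw [abs_of_pos hr]
      exact hb
  rw [hset, MeasureTheory.Measure.volume_eq_prod,
    setIntegral_prod _ hf]

lemma int_log (R : ℝ) (hR : 0 < R) (a : ℂ) (ha : ‖a‖ < R) :
    IntegrableOn (fun p : ℝ × ℝ =>
        p.1 * Real.log (‖a - ↑p.1 * Complex.exp (↑p.2 * Complex.I)‖))
      (Ioo 0 R ×ˢ Ioo (-π) π) (volume.prod volume) := by
  set s := ‖a‖ with hs
  set C := |Real.log (2*R + 1)| with hC
  -- integrability of the majorant in r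
  have ii : IntervalIntegrable (fun x : ℝ => Real.log (x - s)) volume 0 R := by
    simpa using (logint (-s) (R - s)).comp_sub_right s
  have hf1 : IntegrableOn (fun r : ℝ => R * (|Real.log (r - s)| + C)) (Ioo 0 R) volume := by
    have h1 : IntervalIntegrable (fun r : ℝ => R * (|Real.log (r - s)| + C)) volume 0 R :=
      (ii.abs.add intervalIntegrable_const).const_mul R
    exact ((intervalIntegrable_iff_integrableOn_Ioc_of_le hR.le).1 h1).mono_set
      Set.Ioo_subset_Ioc_self
  have hg1 : IntegrableOn (fun _ : ℝ => (1:ℝ)) (Ioo (-π) π) volume := by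
    exact integrableOn_const (by rw [Real.volume_Ioo]; exact ENNReal.ofReal_ne_top)
  have hH : Integrable (fun p : ℝ × ℝ => R * (|Real.log (p.1 - s)| + C))
      ((volume.prod volume).restrict (Ioo 0 R ×ˢ Ioo (-π) π)) := by
    have := Integrable.mul_prod hf1 hg1
    rw [Measure.prod_restrict] at this
    simpa using this
  have hcontin : Continuous (fun p : ℝ × ℝ =>
      ‖a - ↑p.1 * Complex.exp (↑p.2 * Complex.I)‖) := by
    apply continuous_norm.comp
    continuity
  have hmeas : Measurable (fun p : ℝ × ℝ =>
      p.1 * Real.log (‖a - ↑p.1 * Complex.exp (↑p.2 * Complex.I)‖)) :=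
    measurable_fst.mul (Real.measurable_log.comp hcontin.measurable)
  have hns : ∀ᵐ p : ℝ × ℝ ∂(volume.prod volume), p.1 ≠ s := by
    have h0 : (volume.prod volume) (({s} : Set ℝ) ×ˢ (univ : Set ℝ)) = 0 := by
      rw [Measure.prod_prod]; simp
    have hsub : {p : ℝ × ℝ | ¬ p.1 ≠ s} ⊆ ({s} : Set ℝ) ×ˢ (univ : Set ℝ) := by
      intro p hp
      simp only [Set.mem_setOf_eq, not_not] at hp
      exact ⟨hp, Set.mem_univ _⟩
    rw [ae_iff]
    exact measure_mono_null hsub h0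
  apply Integrable.mono' hH hmeas.aestronglyMeasurable
  rw [ae_restrict_iff' (measurableSet_Ioo.prod measurableSet_Ioo)]
  filter_upwards [hns] with p hp hpS
  obtain ⟨⟨hr0, hrR⟩, _⟩ := hpS
  set r := p.1
  set x := ‖a - ↑r * Complex.exp (↑p.2 * Complex.I)‖ with hx
  have habs : ‖(r:ℂ) * Complex.exp (↑p.2 * Complex.I)‖ = r := by
    rw [norm_mul, Complex.norm_exp_ofReal_mul_I, mul_one, Complex.norm_real, Real.norm_eq_abs, abs_of_pos hr0]
  have hlo : |s - r| ≤ x := by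
    have h1 := abs_norm_sub_norm_le a ((r:ℂ) * Complex.exp (↑p.2 * Complex.I))
    rw [habs] at h1
    exact h1
  have hlo' : 0 < |s - r| := by
    rw [abs_pos, sub_ne_zero]
    exact fun h => hp h.symm
  have hup : x ≤ 2*R + 1 := by
    have h1 : x ≤ ‖a‖ + ‖(r:ℂ) * Complex.exp (↑p.2 * Complex.I)‖ := by
      have := norm_sub_le a ((r:ℂ) * Complex.exp (↑p.2 * Complex.I))
      simpa using this
    rw [habs, ← hs] at h1
    linarith
  have hxpos : 0 < x := lt_of_lt_of_le hlo' hlo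
  have hlogup : Real.log x ≤ C := by
    calc Real.log x ≤ Real.log (2*R+1) := Real.log_le_log hxpos hup
      _ ≤ C := le_abs_self _
  have hloglo : -( |Real.log (r - s)| ) ≤ Real.log x := by
    have h1 : Real.log |s - r| ≤ Real.log x := Real.log_le_log hlo' hlo
    have h2 : Real.log |s - r| = Real.log (r - s) := by
      rw [abs_sub_comm, Real.log_abs]
    calc -( |Real.log (r - s)| ) ≤ Real.log (r - s) := neg_abs_le _
      _ = Real.log |s - r| := h2.symm
      _ ≤ Real.log x := h1
  have hbound : |Real.log x| ≤ |Real.log (r - s)| + C := by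
    rw [abs_le]
    constructor
    · have : (0:ℝ) ≤ C := abs_nonneg _
      linarith
    · have : (0:ℝ) ≤ |Real.log (r - s)| := abs_nonneg _
      linarith
  calc ‖r * Real.log x‖ = |r| * |Real.log x| := by rw [Real.norm_eq_abs, abs_mul]
    _ ≤ R * (|Real.log (r - s)| + C) := by
        apply mul_le_mul (by rw [abs_of_pos hr0]; exact hrR.le) hbound (abs_nonneg _) hR.le

lemma per_g2 (a : ℂ) (r : ℝ) :
    Function.Periodic
      (fun θ : ℝ => Real.log (‖a - r * Complex.exp (θ * Complex.I)‖)) (2*π) := by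
  intro θ
  have : ((θ + 2*π : ℝ) : ℂ) * Complex.I = θ * Complex.I + 2*π*Complex.I := by
    push_cast; ring
  simp only [this, Complex.exp_add, Complex.exp_two_pi_mul_I, mul_one]

lemma mul_log_deriv (x : ℝ) (hx : 0 < x) :
    HasDerivAt (fun y : ℝ => y^2 * Real.log y / 2 - y^2/4) (x * Real.log x) x := by
  have h1 : HasDerivAt (fun y : ℝ => y^2 * Real.log y)
      ((2:ℕ) * x^1 * Real.log x + x^2 * x⁻¹) x :=
    (hasDerivAt_pow 2 x).mul (Real.hasDerivAt_log hx.ne')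
  have h2 := (h1.div_const 2).sub ((hasDerivAt_pow 2 x).div_const 4)
  refine h2.congr_deriv ?_
  push_cast
  rw [show x^2 * x⁻¹ = x by rw [sq, mul_assoc, mul_inv_cancel₀ hx.ne', mul_one]]
  ring

lemma inner_formula (R : ℝ) (hR : 0 < R) (a : ℂ) (ha0 : a ≠ 0) (haR : ‖a‖ < R) :
    ∫ z in ball (0:ℂ) R, Real.log (‖a - z‖)
      = π*R^2*Real.log R - π*R^2/2 + π*(‖a‖)^2/2 := by
  set s := ‖a‖ with hs
  have hs0 : 0 < s := norm_pos_iff.mpr ha0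
  rw [polar_ball R hR (fun z => Real.log (‖a - z‖)) (int_log R hR a haR)]
  have hθpi : -π ≤ π := by linarith [Real.pi_pos]
  -- step A : inner θ-integral
  have stepA : ∫ r in Ioo (0:ℝ) R,
        (∫ θ in Ioo (-π) π, r * Real.log (‖a - r * Complex.exp (θ * Complex.I)‖))
      = ∫ r in Ioo (0:ℝ) R, r * (2*π * Real.log (max s r)) := by
    apply setIntegral_congr_ae measurableSet_Ioo
    have hns : ∀ᵐ r : ℝ, r ≠ s := by
      rw [ae_iff]
      simp only [not_not]
      exact measure_mono_null (fun r hr => hr) (measure_singleton s)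
    filter_upwards [hns] with r hrs hr
    obtain ⟨hr0, hrR⟩ := hr
    have h1 : ∫ θ in Ioo (-π) π, r * Real.log (‖a - r * Complex.exp (θ * Complex.I)‖)
        = ∫ θ in (-π)..π, r * Real.log (‖a - r * Complex.exp (θ * Complex.I)‖) := by
      rw [intervalIntegral.integral_of_le hθpi, integral_Ioc_eq_integral_Ioo]
    rw [h1, intervalIntegral.integral_const_mul]
    congr 1
    have h2 := (per_g2 a r).intervalIntegral_add_eq (-π) 0
    rw [show (-π + 2*π : ℝ) = π by ring, zero_add] at h2
    rw [h2]
    exact circle_log a r hr0 (fun h => hrs h.symm)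
  rw [stepA]
  -- step B : to interval integral
  have stepB : ∫ r in Ioo (0:ℝ) R, r * (2*π * Real.log (max s r))
      = ∫ r in (0:ℝ)..R, r * (2*π * Real.log (max s r)) := by
    rw [intervalIntegral.integral_of_le hR.le, integral_Ioc_eq_integral_Ioo]
  rw [stepB]
  -- split at s
  have int1 : ∫ r in (0:ℝ)..s, r * (2*π * Real.log (max s r))
      = 2*π * Real.log s * s^2/2 := by
    have hcong : ∀ r ∈ uIcc (0:ℝ) s, r * (2*π * Real.log (max s r))
        = (2*π * Real.log s) * r := by
      intro r hr
      rw [uIcc_of_le hs0.le] at hr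
      rw [max_eq_left hr.2]
      ring
    rw [intervalIntegral.integral_congr hcong, intervalIntegral.integral_const_mul,
      integral_id]
    ring
  have int2 : ∫ r in s..R, r * (2*π * Real.log (max s r))
      = 2*π * (R^2*Real.log R/2 - R^2/4 - (s^2*Real.log s/2 - s^2/4)) := by
    have hcong : ∀ r ∈ uIcc s R, r * (2*π * Real.log (max s r))
        = (2*π) * (r * Real.log r) := by
      intro r hr
      rw [uIcc_of_le haR.le] at hr
      rw [max_eq_right hr.1]
      ring
    rw [intervalIntegral.integral_congr hcong, intervalIntegral.integral_const_mul]
    congr 1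
    have hderiv : ∀ x ∈ uIcc s R, HasDerivAt (fun y : ℝ => y^2 * Real.log y / 2 - y^2/4)
        (x * Real.log x) x := by
      intro x hx
      rw [uIcc_of_le haR.le] at hx
      exact mul_log_deriv x (lt_of_lt_of_le hs0 hx.1)
    have hint : IntervalIntegrable (fun x : ℝ => x * Real.log x) volume s R := by
      apply ContinuousOn.intervalIntegrable
      apply continuousOn_id.mul
      apply Real.continuousOn_log.mono
      intro x hx
      rw [uIcc_of_le haR.le] at hx
      simp only [Set.mem_compl_iff, Set.mem_singleton_iff]
      exact (lt_of_lt_of_le hs0 hx.1).ne'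
    rw [intervalIntegral.integral_eq_sub_of_hasDerivAt hderiv hint]
  have hsplit : ∫ r in (0:ℝ)..R, r * (2*π * Real.log (max s r))
      = (∫ r in (0:ℝ)..s, r * (2*π * Real.log (max s r)))
        + ∫ r in s..R, r * (2*π * Real.log (max s r)) := by
    have hcts : ∀ u v : ℝ, IntervalIntegrable
        (fun r : ℝ => r * (2*π * Real.log (max s r))) volume u v := by
      intro u v
      apply ContinuousOn.intervalIntegrable
      apply continuousOn_id.mul (continuousOn_const.mul ?_)
      apply Real.continuousOn_log.comp ((continuous_const.max continuous_id).continuousOn)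
      intro r _
      simp only [Set.mem_compl_iff, Set.mem_singleton_iff, id]
      exact ne_of_gt (lt_of_lt_of_le hs0 (le_max_left s r))
    rw [intervalIntegral.integral_add_adjacent_intervals (hcts 0 s) (hcts s R)]
  rw [hsplit, int1, int2]
  have hlog : Real.log s = Real.log s := rfl
  ring

open Complex in
/-- For every `R > 0`,
`∫_{B(0,R)} ∫_{B(0,R)} log|z₁ − z₂| dz₁ dz₂ = π² R⁴ (log R − 1/4)`,
with respect to the Lebesgue (area) measure on `ℂ ≃ ℝ²`. -/
theorem integral_log_dist_ball (R : ℝ) (hR : 0 < R) :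
    ∫ z₁ in Metric.ball (0 : ℂ) R, ∫ z₂ in Metric.ball (0 : ℂ) R,
        Real.log ‖z₁ - z₂‖ =
      Real.pi ^ 2 * R ^ 4 * (Real.log R - 1 / 4) := by
  set c₁ : ℝ := π*R^2*Real.log R - π*R^2/2 with hc₁
  set h : ℂ → ℝ := fun z => c₁ + (π/2) * (‖z‖)^2 with hh
  have step1 : ∫ z₁ in Metric.ball (0 : ℂ) R, ∫ z₂ in Metric.ball (0 : ℂ) R,
      Real.log (‖z₁ - z₂‖) = ∫ z₁ in Metric.ball (0 : ℂ) R, h z₁ := by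
    apply setIntegral_congr_ae measurableSet_ball
    have hne : ∀ᵐ z : ℂ, z ≠ 0 := by
      rw [ae_iff]
      simp only [not_not]
      exact measure_mono_null (fun z hz => hz) (measure_singleton 0)
    filter_upwards [hne] with z₁ hz₁ hball
    rw [mem_ball, dist_zero_right] at hball
    rw [inner_formula R hR z₁ hz₁ hball, hh, hc₁]
    ring
  rw [step1]
  -- integrability of the polar integrand for h
  have hint : IntegrableOn (fun p : ℝ × ℝ => p.1 * h (p.1 * Complex.exp (p.2 * Complex.I)))
      (Ioo 0 R ×ˢ Ioo (-π) π) (volume.prod volume) := by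
    have hμ : (volume.prod volume) (Ioo (0:ℝ) R ×ˢ Ioo (-π) π) < ⊤ := by
      rw [Measure.prod_prod, Real.volume_Ioo, Real.volume_Ioo]
      exact ENNReal.mul_lt_top ENNReal.ofReal_lt_top ENNReal.ofReal_lt_top
    have hcont : Continuous (fun p : ℝ × ℝ => p.1 * h (p.1 * Complex.exp (p.2 * Complex.I))) := by
      apply continuous_fst.mul
      rw [hh]
      apply continuous_const.add
      apply continuous_const.mul
      apply (continuous_norm.comp (by continuity)).pow
    apply Integrable.mono'
      (integrableOn_const hμ.ne : IntegrableOn (fun _ => R*(|c₁| + (π/2)*R^2)) _ _)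
      hcont.aestronglyMeasurable
    rw [ae_restrict_iff' (measurableSet_Ioo.prod measurableSet_Ioo)]
    apply Filter.Eventually.of_forall
    rintro ⟨r, θ⟩ ⟨⟨hr0, hrR⟩, _⟩
    dsimp only at hr0 hrR
    have habs : ‖(r:ℂ) * Complex.exp (↑θ * Complex.I)‖ = r := by
      rw [norm_mul, Complex.norm_exp_ofReal_mul_I, mul_one, Complex.norm_real, Real.norm_eq_abs, abs_of_pos hr0]
    simp only [hh, Real.norm_eq_abs, habs, abs_mul]
    rw [abs_of_pos hr0]
    have h2 : |π/2 * r^2| = π/2 * r^2 := abs_of_nonneg (by positivity)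
    have h1 : |c₁ + π/2 * r^2| ≤ |c₁| + π/2 * R^2 := by
      have h3 := abs_add_le c₁ (π/2 * r^2)
      rw [h2] at h3
      have h4' : r^2 ≤ R^2 := by nlinarith
      have h4 : π/2 * r^2 ≤ π/2 * R^2 := mul_le_mul_of_nonneg_left h4' (by positivity)
      linarith
    exact mul_le_mul hrR.le h1 (abs_nonneg _) hR.le
  rw [polar_ball R hR h hint]
  -- inner θ-integral is constant
  have step2 : ∫ r in Ioo (0:ℝ) R,
      (∫ θ in Ioo (-π) π, r * h (r * Complex.exp (θ * Complex.I)))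
      = ∫ r in Ioo (0:ℝ) R, (2*π) * (r * (c₁ + (π/2)*r^2)) := by
    apply setIntegral_congr_fun measurableSet_Ioo
    intro r hr
    show (∫ θ in Ioo (-π) π, r * h ((r:ℂ) * Complex.exp (↑θ * Complex.I)))
      = 2*π*(r*(c₁+(π/2)*r^2))
    have habs : ∀ θ : ℝ, h ((r:ℂ) * Complex.exp (↑θ * Complex.I)) = c₁ + (π/2)*r^2 := by
      intro θ
      rw [hh]
      simp only
      rw [norm_mul, Complex.norm_exp_ofReal_mul_I, mul_one, Complex.norm_real, Real.norm_eq_abs, abs_of_pos hr.1]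
    have : (fun θ : ℝ => r * h ((r:ℂ) * Complex.exp (↑θ * Complex.I)))
        = fun _ : ℝ => r * (c₁ + (π/2)*r^2) := by
      funext θ; rw [habs θ]
    rw [this, setIntegral_const, Real.volume_real_Ioo_of_le (by linarith [Real.pi_pos]),
      show π - -π = 2*π by ring, smul_eq_mul]
    try ring
  rw [step2]
  have step3 : ∫ r in Ioo (0:ℝ) R, (2*π) * (r * (c₁ + (π/2)*r^2))
      = ∫ r in (0:ℝ)..R, (2*π) * (r * (c₁ + (π/2)*r^2)) := by
    rw [intervalIntegral.integral_of_le hR.le, integral_Ioc_eq_integral_Ioo]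
  rw [step3]
  have expand : (fun r : ℝ => (2*π) * (r * (c₁ + (π/2)*r^2)))
      = fun r : ℝ => (2*π*c₁) * r + (π^2) * r^3 := by
    funext r; ring
  rw [expand]
  rw [intervalIntegral.integral_add
    (((by fun_prop) :
        Continuous fun r : ℝ => (2*π*c₁) * r).intervalIntegrable _ _)
    (((by fun_prop) :
        Continuous fun r : ℝ => (π^2) * r^3).intervalIntegrable _ _)]
  rw [intervalIntegral.integral_const_mul, intervalIntegral.integral_const_mul,
    integral_id, integral_pow]
  rw [hc₁]
  push_cast
  ring
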